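/- Let ε > 0 and ω ∈ ℝ. Define Cos_ω(n) := (E_{iω}(n) + E_{-iω}(n))/2 and Sin_ω(n) := (E_{iω}(n) - E_{-iω}(n))/(2i), where E_{±iω}(n) := ((1 ± iεω/2)/(1 ∓ iεω/2))^n. Then both x = Cos_ω and x = Sin_ω satisfy, for all n ∈ ℤ: (x(n+2) - 2x(n+1) + x(n))/ε² + ω²·(x(n) + 2x(n+1) + x(n+2))/4 = 0. -/

import Mathlib

/-- E_{iω} on the time scale εℤ. -/
noncomputable def cayleyExpI (ε ω : ℝ) (n : ℤ) : ℂ :=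
  ((1 + Complex.I * (ε : ℂ) * (ω : ℂ) / 2) / (1 - Complex.I * (ε : ℂ) * (ω : ℂ) / 2)) ^ n

/-- E_{-iω} on the time scale εℤ. -/
noncomputable def cayleyExpNegI (ε ω : ℝ) (n : ℤ) : ℂ :=
  ((1 - Complex.I * (ε : ℂ) * (ω : ℂ) / 2) / (1 + Complex.I * (ε : ℂ) * (ω : ℂ) / 2)) ^ n

/-- The Cayley-cosine on εℤ. -/
noncomputable def cayleyCos (ε ω : ℝ) (n : ℤ) : ℂ :=
  (cayleyExpI ε ω n + cayleyExpNegI ε ω n) / 2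

/-- The Cayley-sine on εℤ. -/
noncomputable def cayleySin (ε ω : ℝ) (n : ℤ) : ℂ :=
  (cayleyExpI ε ω n - cayleyExpNegI ε ω n) / (2 * Complex.I)

lemma cayley_exp_rec (ε ω : ℝ) (hε : (ε : ℂ) ≠ 0) (z : ℂ)
    (hz2 : z ^ 2 = -(ε : ℂ) ^ 2 * (ω : ℂ) ^ 2 / 4)
    (h1 : (1 : ℂ) - z ≠ 0) (h2 : (1 : ℂ) + z ≠ 0) (n : ℤ) :
    (((1 + z) / (1 - z)) ^ (n + 2) - 2 * ((1 + z) / (1 - z)) ^ (n + 1)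
        + ((1 + z) / (1 - z)) ^ n) / (ε : ℂ) ^ 2
      + (ω : ℂ) ^ 2 * (((1 + z) / (1 - z)) ^ n + 2 * ((1 + z) / (1 - z)) ^ (n + 1)
        + ((1 + z) / (1 - z)) ^ (n + 2)) / 4 = 0 := by
  set a : ℂ := (1 + z) / (1 - z) with ha_def
  have ha : a ≠ 0 := div_ne_zero h2 h1
  have key : (a - 1) ^ 2 / (ε : ℂ) ^ 2 + (ω : ℂ) ^ 2 * (a + 1) ^ 2 / 4 = 0 := by
    have ha1 : a - 1 = 2 * z / (1 - z) := by
      rw [ha_def]; field_simp; ring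
    have ha2 : a + 1 = 2 / (1 - z) := by
      rw [ha_def]; field_simp; ring
    rw [ha1, ha2]
    field_simp
    linear_combination 16 * hz2
  have e2 : a ^ (n + 2) = a ^ n * a * a := by
    rw [show (n + 2 : ℤ) = n + 1 + 1 by ring, zpow_add₀ ha, zpow_add₀ ha, zpow_one]
  have e1 : a ^ (n + 1) = a ^ n * a := by
    rw [zpow_add₀ ha, zpow_one]
  rw [e1, e2]
  linear_combination a ^ n * key

/-- Cayley-trigonometric functions on εℤ satisfy the second-order
oscillator dynamic equation x^{ΔΔ} + ω²·⟨⟨x⟩⟩ = 0. -/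
theorem stmt14 (ε : ℝ) (hε : 0 < ε) (ω : ℝ) :
    ∀ n : ℤ,
      (cayleyCos ε ω (n + 2) - 2 * cayleyCos ε ω (n + 1) + cayleyCos ε ω n) / (ε : ℂ) ^ 2
        + (ω : ℂ) ^ 2 * (cayleyCos ε ω n + 2 * cayleyCos ε ω (n + 1) + cayleyCos ε ω (n + 2)) / 4
        = 0 ∧
      (cayleySin ε ω (n + 2) - 2 * cayleySin ε ω (n + 1) + cayleySin ε ω n) / (ε : ℂ) ^ 2
        + (ω : ℂ) ^ 2 * (cayleySin ε ω n + 2 * cayleySin ε ω (n + 1) + cayleySin ε ω (n + 2)) / 4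
        = 0 := by
  intro n
  have hεC : (ε : ℂ) ≠ 0 := Complex.ofReal_ne_zero.mpr hε.ne'
  set z : ℂ := Complex.I * (ε : ℂ) * (ω : ℂ) / 2 with hz_def
  have hzim : z.re = 0 := by
    simp [hz_def, Complex.div_re, Complex.mul_re, Complex.mul_im]
  have hz2 : z ^ 2 = -(ε : ℂ) ^ 2 * (ω : ℂ) ^ 2 / 4 := by
    rw [hz_def]; ring_nf; simp [Complex.I_sq]; ring
  have h1 : (1 : ℂ) - z ≠ 0 := by
    intro h
    have : (1 - z).re = 0 := by rw [h]; simp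
    simp [Complex.sub_re, hzim] at this
  have h2 : (1 : ℂ) + z ≠ 0 := by
    intro h
    have : (1 + z).re = 0 := by rw [h]; simp
    simp [Complex.add_re, hzim] at this
  have hz2' : (-z) ^ 2 = -(ε : ℂ) ^ 2 * (ω : ℂ) ^ 2 / 4 := by rw [neg_sq]; exact hz2
  have h1' : (1 : ℂ) - (-z) ≠ 0 := by rwa [sub_neg_eq_add]
  have h2' : (1 : ℂ) + (-z) ≠ 0 := by rw [← sub_eq_add_neg]; exact h1
  have hI := cayley_exp_rec ε ω hεC z hz2 h1 h2 n
  have hN := cayley_exp_rec ε ω hεC (-z) hz2' h1' h2' n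
  rw [sub_neg_eq_add, ← sub_eq_add_neg] at hN
  constructor
  · simp only [cayleyCos, cayleyExpI, cayleyExpNegI, ← hz_def]
    linear_combination hI / 2 + hN / 2
  · simp only [cayleySin, cayleyExpI, cayleyExpNegI, ← hz_def]
    linear_combination hI / (2 * Complex.I) - hN / (2 * Complex.I)
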